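/- Let n ≥ 2, let a, b : Fin n → ℝ, and let J(a,b) be the n-node ring Jacobian, regarded as a complex matrix. A complex number λ is an eigenvalue of J(a,b) (i.e., a root of its characteristic polynomial) if and only if ∏_{i} (λ − a_i) = ∏_{i} b_i. -/

import Mathlib

open Polynomial
open scoped Fin.NatCast Fin.CommRing

/-- The n-node ring Jacobian: diagonal entries `a i`, entries `b i` in position
`(i, i+1 mod n)`, all other entries zero. -/
def ringJacobianN (n : ℕ) (a b : Fin n → ℝ) : Matrix (Fin n) (Fin n) ℝ :=
  Matrix.of fun i j =>
    if (j : ℕ) = (i : ℕ) then a i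
    else if (j : ℕ) = ((i : ℕ) + 1) % n then b i else 0

lemma perm_classify {n : ℕ} [NeZero n] (hn : 2 ≤ n) (σ : Equiv.Perm (Fin n))
    (h : ∀ i, σ i = i ∨ σ i = i - 1) : σ = 1 ∨ ∀ i, σ i = i - 1 := by
  by_cases hid : ∀ i, σ i = i
  · left; ext i; simp [hid]
  · right
    push_neg at hid
    obtain ⟨i, hi⟩ := hid
    have hone : (1 : Fin n) ≠ 0 := by
      intro hc
      have := congrArg Fin.val hc
      simp [Fin.val_one'] at this
      omega
    have key : ∀ k : ℕ, σ (i - (k : Fin n)) = i - (k : Fin n) - 1 := by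
      intro k
      induction k with
      | zero => simpa using (h i).resolve_left hi
      | succ k ih =>
        have hne : σ (i - (k : Fin n) - 1) ≠ i - (k : Fin n) - 1 := by
          intro hc
          have h3 := σ.injective (hc.trans ih.symm)
          exact hone (sub_eq_self.mp h3)
        have := (h _).resolve_left hne
        push_cast
        rw [sub_add_eq_sub_sub]
        exact this
    intro j
    have hj := key (i - j).val
    rwa [Fin.cast_val_eq_self, sub_sub_cancel] at hj

theorem eigenvalue_ringJacobianN_iff (n : ℕ) (hn : 2 ≤ n) (a b : Fin n → ℝ)
    (lam : ℂ) :
    ((ringJacobianN n a b).map Complex.ofReal).charpoly.IsRoot lam ↔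
      (∏ i, (lam - a i)) = ∏ i, (b i : ℂ) := by
  obtain ⟨m, rfl⟩ : ∃ m, n = m + 1 := ⟨n - 1, by omega⟩
  haveI : NeZero (m + 1) := ⟨by omega⟩
  have hm : 1 ≤ m := by omega
  set M := (ringJacobianN (m + 1) a b).map Complex.ofReal with hM
  set N : Matrix (Fin (m + 1)) (Fin (m + 1)) ℂ := Matrix.of fun i j =>
    if (j : ℕ) = (i : ℕ) then lam - a i
    else if (j : ℕ) = ((i : ℕ) + 1) % (m + 1) then -(b i : ℂ) else 0 with hN
  have h1 : M.charpoly.IsRoot lam ↔ N.det = 0 := by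
    rw [Polynomial.IsRoot, Matrix.charpoly,
      show eval lam M.charmatrix.det = (Polynomial.evalRingHom lam) M.charmatrix.det from rfl,
      RingHom.map_det, RingHom.mapMatrix_apply]
    have h2 : M.charmatrix.map ⇑(Polynomial.evalRingHom lam) = N := by
      ext i j
      by_cases hij : i = j
      · subst hij
        simp [Matrix.charmatrix_apply_eq, hM, ringJacobianN, hN]
      · rw [Matrix.map_apply, Matrix.charmatrix_apply_ne _ _ _ hij]
        have hji : (j : ℕ) ≠ (i : ℕ) := fun hc => hij (Fin.ext hc.symm)
        simp only [hN, hM, Matrix.of_apply, Matrix.map_apply, ringJacobianN, hji, if_false]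
        split <;> simp
    rw [h2]
  rw [h1]
  -- basic Fin facts
  have hone : (1 : Fin (m + 1)) ≠ 0 := by
    intro hc
    have := congrArg Fin.val hc
    simp [Fin.val_one'] at this
    omega
  have hsucc : ∀ x y : Fin (m + 1), (y : ℕ) = ((x : ℕ) + 1) % (m + 1) ↔ x = y - 1 := by
    intro x y
    constructor
    · intro h
      have : x + 1 = y := by
        apply Fin.ext
        rw [Fin.add_def]
        simp [Fin.val_one']
        omega
      rw [← this]; simp
    · intro h
      have hxy : x + 1 = y := by rw [h]; ring
      rw [← hxy, Fin.add_def]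
      simp [Fin.val_one']
  -- the cyclic permutation
  set c : Equiv.Perm (Fin (m + 1)) := (finRotate (m + 1))⁻¹ with hc
  have hcapp : ∀ i, c i = i - 1 := by
    intro i
    have h4 : finRotate (m + 1) (i - 1) = i := by
      rw [finRotate_succ_apply]; ring
    rw [hc, Equiv.Perm.inv_def, Equiv.symm_apply_eq]
    exact h4.symm
  have h1c : (1 : Equiv.Perm (Fin (m + 1))) ≠ c := by
    intro h
    have h0 := (congrArg (fun σ : Equiv.Perm (Fin (m + 1)) => σ 0) h)
    simp only [Equiv.Perm.one_apply, hcapp] at h0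
    exact hone (sub_eq_self.mp h0.symm)
  -- determinant expansion
  rw [Matrix.det_apply']
  have hvanish : ∀ σ ∈ Finset.univ, σ ∉ ({1, c} : Finset (Equiv.Perm (Fin (m + 1)))) →
      (Equiv.Perm.sign σ : ℂ) * ∏ i, N (σ i) i = 0 := by
    intro σ _ hσ
    simp only [Finset.mem_insert, Finset.mem_singleton, not_or] at hσ
    have hex : ¬ ∀ i, σ i = i ∨ σ i = i - 1 := by
      intro hall
      rcases perm_classify hn σ hall with h | h
      · exact hσ.1 h
      · exact hσ.2 (Equiv.ext fun i => by rw [hcapp]; exact h i)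
    push_neg at hex
    obtain ⟨i, hi1, hi2⟩ := hex
    have hz : N (σ i) i = 0 := by
      have e1 : (i : ℕ) ≠ ((σ i : Fin (m + 1)) : ℕ) := fun hc => hi1 (Fin.ext hc.symm)
      have e2 : (i : ℕ) ≠ (((σ i : Fin (m + 1)) : ℕ) + 1) % (m + 1) :=
        fun hc => hi2 ((hsucc _ _).mp hc)
      simp [hN, e1, e2]
    exact mul_eq_zero_of_right _ (Finset.prod_eq_zero (Finset.mem_univ i) hz)
  rw [← Finset.sum_subset (Finset.subset_univ ({1, c} : Finset (Equiv.Perm (Fin (m + 1)))))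
    hvanish, Finset.sum_pair h1c]
  have hterm1 : (Equiv.Perm.sign (1 : Equiv.Perm (Fin (m + 1))) : ℂ) *
      ∏ i, N ((1 : Equiv.Perm (Fin (m + 1))) i) i = ∏ i, (lam - a i) := by
    simp [hN]
  have htermc : (Equiv.Perm.sign c : ℂ) * ∏ i, N (c i) i = -∏ i, (b i : ℂ) := by
    have hsign : (Equiv.Perm.sign c : ℤ) = (-1) ^ m := by
      rw [hc, Equiv.Perm.sign_inv, sign_finRotate]
      simp
    have hentry : ∀ i : Fin (m + 1), N (c i) i = -(b (i - 1) : ℂ) := by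
      intro i
      have e1 : (i : ℕ) ≠ ((i - 1 : Fin (m + 1)) : ℕ) := by
        intro hc'
        have h2 : i = i - 1 := Fin.ext hc'
        have h3 : i - 1 = i := h2.symm
        rw [sub_eq_self] at h3
        exact hone h3
      have e2 : (i : ℕ) = (((i - 1 : Fin (m + 1)) : ℕ) + 1) % (m + 1) := (hsucc (i - 1) i).mpr rfl
      rw [hcapp, hN]
      simp only [Matrix.of_apply]
      rw [if_neg (Ne.symm (Ne.symm e1)), if_pos e2]
    have hprod : ∏ i, N (c i) i = (-1) ^ (m + 1) * ∏ i, (b i : ℂ) := by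
      simp only [hentry]
      rw [Fintype.prod_equiv (Equiv.subRight (1 : Fin (m + 1))) (fun x => -(b (x - 1) : ℂ))
        (fun y => -(b y : ℂ)) (fun x => by simp)]
      have hneg : ∀ y : Fin (m + 1), -(b y : ℂ) = (-1) * (b y : ℂ) := fun y => by ring
      simp only [hneg]
      rw [Finset.prod_mul_distrib, Finset.prod_const]
      simp
    have hs2 : ((Equiv.Perm.sign c : ℤ) : ℂ) = (-1) ^ m := by rw [hsign]; push_cast; ring
    rw [hprod, hs2, ← mul_assoc, ← pow_add, Odd.neg_one_pow ⟨m, by ring⟩, neg_one_mul]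
  rw [hterm1, htermc, ← sub_eq_add_neg, sub_eq_zero]
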